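/- arXiv:1805.00229 — 3 statements merged into one kernel-verified Lean document; each statement's English description precedes it below -/
import Mathlib

section
/- Let P = (S, 𝓛) be a nondegenerate polar space. Then for every point a ∈ S, the set a^⊥ of all points collinear with a is a hyperplane of P (i.e. a proper subspace of P that meets every line). -/
namespace PolarComp

variable {S : Type*}

/-- A partial linear space: every line has at least two points, and two
distinct lines share at most one point. -/
def IsPLS (𝓛 : Set (Set S)) : Prop :=
  (∀ l ∈ 𝓛, ∃ a b : S, a ≠ b ∧ a ∈ l ∧ b ∈ l) ∧
  (∀ l ∈ 𝓛, ∀ m ∈ 𝓛, l ≠ m → ∀ a b : S, a ∈ l ∩ m → b ∈ l ∩ m → a = b)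

/-- Thick: every line has at least three points. -/
def Thick (𝓛 : Set (Set S)) : Prop :=
  ∀ l ∈ 𝓛, ∃ a b c : S, a ≠ b ∧ a ≠ c ∧ b ≠ c ∧ a ∈ l ∧ b ∈ l ∧ c ∈ l

/-- Two points are collinear iff they lie on a common line (every point is
collinear with itself). -/
def Collin (𝓛 : Set (Set S)) (a b : S) : Prop :=
  a = b ∨ ∃ l ∈ 𝓛, a ∈ l ∧ b ∈ l

/-- Nondegenerate: no point is collinear with all other points. -/
def Nondegenerate (𝓛 : Set (Set S)) : Prop :=
  ∀ a : S, ∃ b : S, ¬ Collin 𝓛 a b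

/-- The one-or-all axiom: a point off a line is collinear with exactly one or
with all points of the line. -/
def OneOrAll (𝓛 : Set (Set S)) : Prop :=
  ∀ l ∈ 𝓛, ∀ a : S, a ∉ l →
    (∃! b, b ∈ l ∧ Collin 𝓛 a b) ∨ (∀ b ∈ l, Collin 𝓛 a b)

/-- A polar space is a partial linear space satisfying the one-or-all axiom. -/
def IsPolarSpace (𝓛 : Set (Set S)) : Prop := IsPLS 𝓛 ∧ OneOrAll 𝓛

/-- A subspace: contains every line meeting it in at least two points. -/
def IsSubspace (𝓛 : Set (Set S)) (X : Set S) : Prop :=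
  ∀ l ∈ 𝓛, (∃ a ∈ l ∩ X, ∃ b ∈ l ∩ X, a ≠ b) → l ⊆ X

/-- A hyperplane: a proper subspace meeting every line. -/
def IsHyperplane (𝓛 : Set (Set S)) (X : Set S) : Prop :=
  IsSubspace 𝓛 X ∧ X ≠ Set.univ ∧ ∀ l ∈ 𝓛, (l ∩ X).Nonempty

/-- A singular set: any two of its points are collinear. -/
def SingularSet (𝓛 : Set (Set S)) (X : Set S) : Prop :=
  ∀ a ∈ X, ∀ b ∈ X, Collin 𝓛 a b

/-- Rank at least `n`: there is a strictly increasing chain of `n` nonempty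
singular subspaces. -/
def RankAtLeast (𝓛 : Set (Set S)) (n : ℕ) : Prop :=
  ∃ X : Fin n → Set S, StrictMono X ∧
    ∀ i, (X i).Nonempty ∧ SingularSet 𝓛 (X i) ∧ IsSubspace 𝓛 (X i)

/-- `perp 𝓛 a` is the set of points collinear with `a`. -/
def perp (𝓛 : Set (Set S)) (a : S) : Set S := {b | Collin 𝓛 a b}

/-- The radical of `X`: `X ∩ X^⊥`. -/
def radSet (𝓛 : Set (Set S)) (X : Set S) : Set S :=
  X ∩ {a | ∀ b ∈ X, Collin 𝓛 a b}

/-- The lines of the complement `D(P, W)`. -/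
def compLines (𝓛 : Set (Set S)) (W : Set S) : Set (Set S) :=
  {K | ∃ k ∈ 𝓛, ¬ k ⊆ W ∧ K = k \ W}

/-- Two proper lines are parallel iff their closures meet in `W`. -/
def Parallel (𝓛 : Set (Set S)) (W : Set S) (K L : Set S) : Prop :=
  ∃ k ∈ 𝓛, ∃ l ∈ 𝓛, ¬ k ⊆ W ∧ ¬ l ⊆ W ∧ K = k \ W ∧ L = l \ W ∧
    (k ∩ l ∩ W).Nonempty

/-- A proper line is affine iff its closure meets `W`. -/
def IsAffineLine (𝓛 : Set (Set S)) (W : Set S) (K : Set S) : Prop :=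
  ∃ k ∈ 𝓛, ¬ k ⊆ W ∧ K = k \ W ∧ (k ∩ W).Nonempty

/-- `AtInfinity 𝓛 W K a` says that `a = K^∞`, i.e. `a` is a point of `K̄ ∩ W`. -/
def AtInfinity (𝓛 : Set (Set S)) (W : Set S) (K : Set S) (a : S) : Prop :=
  ∃ k ∈ 𝓛, ¬ k ⊆ W ∧ K = k \ W ∧ a ∈ k ∩ W

/-- A deep point of `W`: a point of `W` which is `L^∞` for no affine line `L`. -/
def IsDeepPoint (𝓛 : Set (Set S)) (W : Set S) (a : S) : Prop :=
  a ∈ W ∧ ∀ K : Set S, ¬ AtInfinity 𝓛 W K a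

/-- A plane: a minimal singular subspace containing a given line and a given
point not on that line. -/
def IsPlane (𝓛 : Set (Set S)) (X : Set S) : Prop :=
  ∃ l ∈ 𝓛, ∃ a : S, a ∉ l ∧ a ∈ X ∧ l ⊆ X ∧
    SingularSet 𝓛 X ∧ IsSubspace 𝓛 X ∧
    ∀ Y : Set S, SingularSet 𝓛 Y → IsSubspace 𝓛 Y → l ⊆ Y → a ∈ Y → Y ⊆ X → Y = X

/-- `Π^∞`: the points at infinity of a plane of the complement with closure `Pl`. -/
def planeInfinity (𝓛 : Set (Set S)) (W : Set S) (Pl : Set S) : Set S :=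
  {a | ∃ M : Set S, IsAffineLine 𝓛 W M ∧ M ⊆ Pl \ W ∧ AtInfinity 𝓛 W M a}

/-- A deep line: an improper line `L ⊆ W` which is `Π^∞` for no plane of the
complement. -/
def IsDeepLine (𝓛 : Set (Set S)) (W : Set S) (L : Set S) : Prop :=
  L ∈ 𝓛 ∧ L ⊆ W ∧
    ∀ Pl : Set S, IsPlane 𝓛 Pl → ¬ Pl ⊆ W → planeInfinity 𝓛 W Pl ≠ L

/-- The relation `∥*` on proper lines of the complement. -/
def ParStar (𝓛 : Set (Set S)) (W : Set S) (K₁ K₂ : Set S) : Prop :=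
  K₁ ∈ compLines 𝓛 W ∧ K₂ ∈ compLines 𝓛 W ∧ K₁ ∩ K₂ = ∅ ∧
    ∃ L₁ ∈ compLines 𝓛 W, ∃ L₂ ∈ compLines 𝓛 W, L₁ ≠ L₂ ∧
      (L₁ ∩ L₂).Nonempty ∧ (L₁ ∩ K₁).Nonempty ∧ (L₁ ∩ K₂).Nonempty ∧
      (L₂ ∩ K₁).Nonempty ∧ (L₂ ∩ K₂).Nonempty

/-- `∥ᵗ`: the transitive closure of `∥*`. -/
def ParT (𝓛 : Set (Set S)) (W : Set S) : Set S → Set S → Prop :=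
  Relation.TransGen (ParStar 𝓛 W)

/-- The anti-euclidean relation `~` on affine lines: `K₁ ~ K₂` iff no affine
line through a point of `K₁` is parallel to `K₂`. -/
def Tilde (𝓛 : Set (Set S)) (W : Set S) (K₁ K₂ : Set S) : Prop :=
  ∀ a ∈ K₁, ∀ M : Set S, IsAffineLine 𝓛 W M → a ∈ M → ¬ Parallel 𝓛 W M K₂

/-- `[K₁] ≡ [K₂]`: `M ~ N` and `N ~ M` for all `M ∥ K₁` and `N ∥ K₂`. -/
def EquivCls (𝓛 : Set (Set S)) (W : Set S) (K₁ K₂ : Set S) : Prop :=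
  ∀ M N : Set S, IsAffineLine 𝓛 W M → IsAffineLine 𝓛 W N →
    Parallel 𝓛 W M K₁ → Parallel 𝓛 W N K₂ → Tilde 𝓛 W M N ∧ Tilde 𝓛 W N M

/-- The parallel class of an affine line. -/
def parClass (𝓛 : Set (Set S)) (W : Set S) (L : Set S) : Set (Set S) :=
  {M | IsAffineLine 𝓛 W M ∧ Parallel 𝓛 W M L}

/-- The class of affine lines with point at infinity `w`. -/
def classAt (𝓛 : Set (Set S)) (W : Set S) (w : S) : Set (Set S) :=
  {L | IsAffineLine 𝓛 W L ∧ AtInfinity 𝓛 W L w}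

/-- A witness that the polar space embeds in a projective space `ℙ(F, V)`. -/
structure EmbeddingWitness (𝓛 : Set (Set S)) where
  F : Type
  [iF : DivisionRing F]
  V : Type
  [iV : AddCommGroup V]
  [iM : Module F V]
  f : S → Projectivization F V
  inj : Function.Injective f
  spanning : ∀ T : Submodule F V, (∀ s : S, Projectivization.submodule (f s) ≤ T) → T = ⊤
  lines2dim : ∀ l ∈ 𝓛, ∃ U : Submodule F V, Module.finrank F ↥U = 2 ∧
    f '' l = {p | ∃ v : V, ∃ hv : v ≠ 0, v ∈ U ∧ p = Projectivization.mk F v hv}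

/-- An embeddable polar space. -/
def Embeddable (𝓛 : Set (Set S)) : Prop := Nonempty (EmbeddingWitness 𝓛)


theorem statement_0 (𝓛 : Set (Set S)) (hpolar : IsPolarSpace 𝓛)
    (hnd : Nondegenerate 𝓛) :
    ∀ a : S, IsHyperplane 𝓛 (perp 𝓛 a) := by
  intro a
  refine ⟨?_, ?_, ?_⟩
  · rintro l hl ⟨b, ⟨hbl, hba⟩, c, ⟨hcl, hca⟩, hbc⟩ x hx
    by_cases hal : a ∈ l
    · exact Or.inr ⟨l, hl, hal, hx⟩
    · rcases hpolar.2 l hl a hal with ⟨d, _, hu⟩ | hall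
      · exact absurd ((hu b ⟨hbl, hba⟩).trans (hu c ⟨hcl, hca⟩).symm) hbc
      · exact hall x hx
  · obtain ⟨b, hb⟩ := hnd a
    intro h
    exact hb (show b ∈ perp 𝓛 a from h.symm ▸ Set.mem_univ b)
  · intro l hl
    by_cases hal : a ∈ l
    · exact ⟨a, hal, Or.inl rfl⟩
    · rcases hpolar.2 l hl a hal with ⟨d, hd, _⟩ | hall
      · exact ⟨d, hd.1, hd.2⟩
      · obtain ⟨b, c, hne, hbl, hcl⟩ := hpolar.1.1 l hl
        exact ⟨b, hbl, hall b hbl⟩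

end PolarComp
end

section
/- Let P = (S, 𝓛) be a thick nondegenerate polar space of rank at least 3 and let W be a hyperplane of P. Then W contains at most one deep point, and every deep point of W lies in rad W. -/
namespace PolarComp

variable {S : Type*}

section Aux

variable {𝓛 : Set (Set S)} {W : Set S}

private lemma collin_symm {a b : S} (h : Collin 𝓛 a b) : Collin 𝓛 b a := by
  rcases h with rfl | ⟨l, hl, h1, h2⟩
  · exact Or.inl rfl
  · exact Or.inr ⟨l, hl, h2, h1⟩

private lemma collin_line {l : Set S} (hl : l ∈ 𝓛) {a b : S} (ha : a ∈ l) (hb : b ∈ l) :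
    Collin 𝓛 a b := Or.inr ⟨l, hl, ha, hb⟩

private lemma line_exists {a b : S} (h : Collin 𝓛 a b) (hne : a ≠ b) :
    ∃ l ∈ 𝓛, a ∈ l ∧ b ∈ l := by
  rcases h with rfl | h
  · exact absurd rfl hne
  · exact h

private lemma ooa_exists (hpolar : IsPolarSpace 𝓛) {l : Set S} (hl : l ∈ 𝓛) (x : S) :
    ∃ b ∈ l, Collin 𝓛 x b := by
  by_cases hx : x ∈ l
  · exact ⟨x, hx, Or.inl rfl⟩
  · rcases hpolar.2 l hl x hx with ⟨b, ⟨hbl, hbc⟩, _⟩ | hall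
    · exact ⟨b, hbl, hbc⟩
    · obtain ⟨c, d, hcd, hcl, hdl⟩ := hpolar.1.1 l hl
      exact ⟨c, hcl, hall c hcl⟩

private lemma unique_on (hpolar : IsPolarSpace 𝓛) {l : Set S} (hl : l ∈ 𝓛) {x : S}
    (hx : x ∉ l) {d : S} (hd : d ∈ l) (hnd : ¬ Collin 𝓛 x d) {b c : S}
    (hb : b ∈ l) (hc : c ∈ l) (h1 : Collin 𝓛 x b) (h2 : Collin 𝓛 x c) : b = c := by
  rcases hpolar.2 l hl x hx with ⟨e, _, hu⟩ | hall
  · rw [hu b ⟨hb, h1⟩, hu c ⟨hc, h2⟩]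
  · exact absurd (hall d hd) hnd

private lemma all_of_two (hpolar : IsPolarSpace 𝓛) {l : Set S} (hl : l ∈ 𝓛) {x b c : S}
    (hb : b ∈ l) (hc : c ∈ l) (hbc : b ≠ c) (h1 : Collin 𝓛 x b) (h2 : Collin 𝓛 x c)
    {d : S} (hd : d ∈ l) : Collin 𝓛 x d := by
  by_cases hx : x ∈ l
  · exact collin_line hl hx hd
  · by_contra hcon
    exact hbc (unique_on hpolar hl hx hd hcon hb hc h1 h2)

private lemma exists_line_through (hpolar : IsPolarSpace 𝓛) (hL : ∃ l, l ∈ 𝓛) (x : S) :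
    ∃ l ∈ 𝓛, x ∈ l := by
  obtain ⟨l0, hl0⟩ := hL
  by_cases hx : x ∈ l0
  · exact ⟨l0, hl0, hx⟩
  · obtain ⟨b, hbl, hbc⟩ := ooa_exists hpolar hl0 x
    rcases hbc with rfl | ⟨l, hl, h1, h2⟩
    · exact absurd hbl hx
    · exact ⟨l, hl, h1⟩

private lemma w_inter_unique (hW : IsHyperplane 𝓛 W) {k : Set S} (hk : k ∈ 𝓛)
    (hknW : ¬ k ⊆ W) {b c : S} (hb : b ∈ k) (hbW : b ∈ W) (hc : c ∈ k) (hcW : c ∈ W) :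
    b = c := by
  by_contra hbc
  exact hknW (hW.1 k hk ⟨b, ⟨hb, hbW⟩, c, ⟨hc, hcW⟩, hbc⟩)

private lemma deep_line {d : S} (hd : IsDeepPoint 𝓛 W d)
    {k : Set S} (hk : k ∈ 𝓛) (hdk : d ∈ k) : k ⊆ W := by
  by_contra hns
  exact hd.2 (k \ W) ⟨k, hk, hns, rfl, hdk, hd.1⟩

private lemma deep_nbr {d : S} (hd : IsDeepPoint 𝓛 W d) {y : S} (hc : Collin 𝓛 d y) :
    y ∈ W := by
  rcases hc with rfl | ⟨l, hl, h1, h2⟩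
  · exact hd.1
  · exact deep_line hd hl h1 h2

private lemma deep_spread (hpolar : IsPolarSpace 𝓛) (hW : IsHyperplane 𝓛 W) {d : S}
    (hd : IsDeepPoint 𝓛 W d) {s : S} (hsW : s ∈ W) (hns : ¬ Collin 𝓛 d s) :
    IsDeepPoint 𝓛 W s := by
  refine ⟨hsW, ?_⟩
  rintro K ⟨k, hk, hknW, rfl, hsk, hsW'⟩
  obtain ⟨b, hbk, hbc⟩ := ooa_exists hpolar hk d
  have hbW : b ∈ W := deep_nbr hd hbc
  have hbs : b ≠ s := fun h => hns (h ▸ hbc)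
  exact hknW (hW.1 k hk ⟨b, ⟨hbk, hbW⟩, s, ⟨hsk, hsW'⟩, hbs⟩)

private lemma deep_trace (hpolar : IsPolarSpace 𝓛) (hW : IsHyperplane 𝓛 W) {d : S}
    (hd : IsDeepPoint 𝓛 W d) {k : Set S} (hk : k ∈ 𝓛) (hknW : ¬ k ⊆ W) {h : S}
    (hhk : h ∈ k) (hhW : h ∈ W) : Collin 𝓛 d h := by
  obtain ⟨b, hbk, hbc⟩ := ooa_exists hpolar hk d
  have hbW : b ∈ W := deep_nbr hd hbc
  have hbh : b = h := w_inter_unique hW hk hknW hbk hbW hhk hhW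
  exact hbh ▸ hbc

private lemma deep_rad (hpolar : IsPolarSpace 𝓛) (hthick : Thick 𝓛)
    (hnd : Nondegenerate 𝓛) (hL : ∃ l, l ∈ 𝓛) (hW : IsHyperplane 𝓛 W) {a : S}
    (hda : IsDeepPoint 𝓛 W a) : ∀ w ∈ W, Collin 𝓛 a w := by
  intro w hwW
  by_contra hnaw
  have hdw : IsDeepPoint 𝓛 W w := deep_spread hpolar hW hda hwW hnaw
  obtain ⟨x, hx⟩ := (Set.ne_univ_iff_exists_notMem W).mp hW.2.1
  have hnax : ¬ Collin 𝓛 a x := fun h => hx (deep_nbr hda h)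
  have hnwx : ¬ Collin 𝓛 w x := fun h => hx (deep_nbr hdw h)
  obtain ⟨k, hk, hxk⟩ := exists_line_through hpolar hL x
  have hknW : ¬ k ⊆ W := fun h => hx (h hxk)
  obtain ⟨h, hhk, hhW⟩ := hW.2.2 k hk
  have hah : Collin 𝓛 a h := deep_trace hpolar hW hda hk hknW hhk hhW
  have hwh : Collin 𝓛 w h := deep_trace hpolar hW hdw hk hknW hhk hhW
  have hxh : Collin 𝓛 x h := collin_line hk hxk hhk
  have haneh : a ≠ h := fun e => hnax (collin_line hk (by rw [e]; exact hhk) hxk)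
  obtain ⟨j, hj, haj, hhj⟩ := line_exists hah haneh
  have hjW : j ⊆ W := deep_line hda hj haj
  have hwj : w ∉ j := fun h' => hnaw (collin_symm (collin_line hj h' haj))
  have hnwa : ¬ Collin 𝓛 w a := fun h' => hnaw (collin_symm h')
  have hW_unique : ∀ d ∈ j, Collin 𝓛 w d → d = h := fun d hdj hcwd =>
    unique_on hpolar hj hwj haj hnwa hdj hhj hcwd hwh
  have hdeepj : ∀ d ∈ j, d ≠ h → IsDeepPoint 𝓛 W d := fun d hdj hdh =>
    deep_spread hpolar hW hdw (hjW hdj) (fun h' => hdh (hW_unique d hdj h'))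
  obtain ⟨s, hs⟩ := hnd h
  have hsh : ¬ Collin 𝓛 s h := fun h' => hs (collin_symm h')
  have hsj : s ∉ j := fun h' => hs (collin_line hj hhj h')
  obtain ⟨p, hpj, hsp⟩ := ooa_exists hpolar hj s
  have hph : p ≠ h := fun e => hsh (e ▸ hsp)
  have hpdeep : IsDeepPoint 𝓛 W p := hdeepj p hpj hph
  by_cases hsW : s ∈ W
  · obtain ⟨p1, p2, p3, h12, h13, h23, m1, m2, m3⟩ := hthick j hj
    have hd3 : ∃ d ∈ j, d ≠ h ∧ d ≠ p := by
      rcases eq_or_ne p1 h with e1 | e1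
      · rcases eq_or_ne p2 p with e2 | e2
        · exact ⟨p3, m3, by rw [← e1]; exact fun e => h13 e.symm,
            by rw [← e2]; exact fun e => h23 e.symm⟩
        · exact ⟨p2, m2, by rw [← e1]; exact fun e => h12 e.symm, e2⟩
      · rcases eq_or_ne p1 p with e2 | e2
        · rcases eq_or_ne p2 h with e3 | e3
          · exact ⟨p3, m3, by rw [← e3]; exact fun e => h23 e.symm,
              by rw [← e2]; exact fun e => h13 e.symm⟩
          · exact ⟨p2, m2, e3, by rw [← e2]; exact fun e => h12 e.symm⟩
        · exact ⟨p1, m1, e1, e2⟩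
    obtain ⟨d, hdj, hdh, hdp⟩ := hd3
    have hnsd : ¬ Collin 𝓛 s d :=
      fun h' => hdp (unique_on hpolar hj hsj hhj hsh hdj hpj h' hsp)
    have hddeep := hdeepj d hdj hdh
    have hsdeep : IsDeepPoint 𝓛 W s :=
      deep_spread hpolar hW hddeep hsW (fun h' => hnsd (collin_symm h'))
    have hhdeep : IsDeepPoint 𝓛 W h := deep_spread hpolar hW hsdeep hhW hsh
    exact hx (deep_nbr hhdeep (collin_line hk hhk hxk))
  · exact hsW (deep_nbr hpdeep (collin_symm hsp))

private lemma perp_inj (hpolar : IsPolarSpace 𝓛) (hnd : Nondegenerate 𝓛) {a b : S}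
    (hne : a ≠ b) (H : ∀ y, Collin 𝓛 a y ↔ Collin 𝓛 b y) : False := by
  have hab : Collin 𝓛 a b := (H b).mpr (Or.inl rfl)
  obtain ⟨l, hl, hal, hbl⟩ := line_exists hab hne
  have F1 : ∀ u, Collin 𝓛 a u → ∀ c ∈ l, Collin 𝓛 u c := by
    intro u hau c hcl
    have hbu : Collin 𝓛 b u := (H u).mp hau
    exact all_of_two hpolar hl hal hbl hne (collin_symm hau) (collin_symm hbu) hcl
  obtain ⟨y, hnay⟩ := hnd a
  have hnya : ¬ Collin 𝓛 y a := fun h => hnay (collin_symm h)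
  have hnby : ¬ Collin 𝓛 b y := fun h => hnay ((H y).mpr h)
  have hyl : y ∉ l := fun h => hnay (collin_line hl hal h)
  obtain ⟨p, hpl, hyp⟩ := ooa_exists hpolar hl y
  have uniq_y_l : ∀ c ∈ l, Collin 𝓛 y c → c = p := fun c hcl hyc =>
    unique_on hpolar hl hyl hal hnya hcl hpl hyc hyp
  have hpa : p ≠ a := fun e => hnay (collin_symm (e ▸ hyp))
  have hpy : p ≠ y := fun e => hyl (e ▸ hpl)
  obtain ⟨m, hm, hym, hpm⟩ := line_exists hyp (Ne.symm hpy)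
  have F2 : ∀ c ∈ l, c ≠ p → ∀ z ∈ m, z ≠ p → ¬ Collin 𝓛 c z := by
    intro c hcl hcp z hzm hzp hcz
    have hcm : c ∉ m := fun h' => hcp (uniq_y_l c hcl (collin_line hm hym h'))
    have hcy : ¬ Collin 𝓛 c y := fun h' => hcp (uniq_y_l c hcl (collin_symm h'))
    exact hzp (unique_on hpolar hm hcm hym hcy hzm hpm hcz (collin_line hl hcl hpl))
  obtain ⟨s, hnps⟩ := hnd p
  have hnas : ¬ Collin 𝓛 a s := fun h => hnps (collin_symm (F1 s h p hpl))
  have hnsa : ¬ Collin 𝓛 s a := fun h => hnas (collin_symm h)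
  have hnsp : ¬ Collin 𝓛 s p := fun h => hnps (collin_symm h)
  have hsl : s ∉ l := fun h' => hnps (collin_line hl hpl h')
  obtain ⟨q, hql, hsq⟩ := ooa_exists hpolar hl s
  have uniq_s_l : ∀ c ∈ l, Collin 𝓛 s c → c = q := fun c hcl h =>
    unique_on hpolar hl hsl hal hnsa hcl hql h hsq
  have hqp : q ≠ p := fun e => hnsp (e ▸ hsq)
  have hqa : q ≠ a := fun e => hnsa (e ▸ hsq)
  have hqs : q ≠ s := fun e => hsl (e ▸ hql)
  obtain ⟨n, hn, hsn, hqn⟩ := line_exists hsq (Ne.symm hqs)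
  have F3 : ∀ c ∈ l, c ≠ q → ∀ z ∈ n, z ≠ q → ¬ Collin 𝓛 c z := by
    intro c hcl hcq z hzn hzq hcz
    have hcn : c ∉ n := fun h' => hcq (uniq_s_l c hcl (collin_line hn hsn h'))
    have hcs : ¬ Collin 𝓛 c s := fun h' => hcq (uniq_s_l c hcl (collin_symm h'))
    exact hzq (unique_on hpolar hn hcn hsn hcs hzn hqn hcz (collin_line hl hcl hql))
  have hyp_ne : y ≠ p := Ne.symm hpy
  have hnqy : ¬ Collin 𝓛 q y := F2 q hql hqp y hym hyp_ne
  have hyn : y ∉ n := fun h' => hnqy (collin_symm (collin_line hn h' hqn))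
  obtain ⟨z, hzn, hyz⟩ := ooa_exists hpolar hn y
  have hzq : z ≠ q := fun e => hnqy (collin_symm (e ▸ hyz))
  have hnpz : ¬ Collin 𝓛 p z := F3 p hpl (Ne.symm hqp) z hzn hzq
  have hnaz : ¬ Collin 𝓛 a z := F3 a hal (Ne.symm hqa) z hzn hzq
  have hzy : z ≠ y := fun e => hnpz (by rw [e]; exact collin_line hm hpm hym)
  obtain ⟨o, ho, hyo, hzo⟩ := line_exists hyz (Ne.symm hzy)
  have hpo : p ∉ o := fun h' => hnpz (collin_line ho h' hzo)
  obtain ⟨u, huo, hau⟩ := ooa_exists hpolar ho a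
  have hup : Collin 𝓛 u p := F1 u hau p hpl
  have huy : u = y :=
    unique_on hpolar ho hpo hzo hnpz huo hyo (collin_symm hup) (collin_line hm hpm hym)
  exact hnay (huy ▸ hau)

end Aux

theorem statement_3 (𝓛 : Set (Set S)) (hpolar : IsPolarSpace 𝓛) (hthick : Thick 𝓛)
    (hnd : Nondegenerate 𝓛) (hrank : RankAtLeast 𝓛 3)
    (W : Set S) (hW : IsHyperplane 𝓛 W) :
    (∀ a b : S, IsDeepPoint 𝓛 W a → IsDeepPoint 𝓛 W b → a = b) ∧
    (∀ a : S, IsDeepPoint 𝓛 W a → a ∈ radSet 𝓛 W) := by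
  obtain ⟨X, hmono, hprop⟩ := hrank
  have hL : ∃ l, l ∈ 𝓛 := by
    obtain ⟨u, hu⟩ := (hprop 0).1
    have hlt : X 0 ⊂ X 1 := hmono (by decide : (0 : Fin 3) < 1)
    obtain ⟨v, hv1, hv0⟩ := Set.exists_of_ssubset hlt
    have huv : Collin 𝓛 u v := (hprop 1).2.1 u (hlt.subset hu) v hv1
    have hne : u ≠ v := fun e => hv0 (e ▸ hu)
    obtain ⟨l, hl, -⟩ := line_exists huv hne
    exact ⟨l, hl⟩
  refine ⟨fun a b hda hdb => ?_, fun a hda => ⟨hda.1, fun w hw =>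
    deep_rad hpolar hthick hnd hL hW hda w hw⟩⟩
  by_contra hne
  exact perp_inj hpolar hnd hne (fun y =>
    ⟨fun h => deep_rad hpolar hthick hnd hL hW hdb y (deep_nbr hda h),
     fun h => deep_rad hpolar hthick hnd hL hW hda y (deep_nbr hdb h)⟩)

end PolarComp
end

section
/- Let P = (S, 𝓛) be a thick nondegenerate polar space of rank at least 3 and let W be a proper subspace of P that is contained in some hyperplane of P but is not itself a hyperplane. Then W contains no deep points; that is, every point of W equals L^∞ for some affine line L of D(P, W), and in particular W is spiky. -/
namespace PolarComp

variable {S : Type*}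

theorem statement_4 (𝓛 : Set (Set S)) (hpolar : IsPolarSpace 𝓛) (hthick : Thick 𝓛)
    (hnd : Nondegenerate 𝓛) (hrank : RankAtLeast 𝓛 3)
    (W : Set S) (hsub : IsSubspace 𝓛 W) (hproper : W ≠ Set.univ)
    (hhyp : ∃ H : Set S, IsHyperplane 𝓛 H ∧ W ⊆ H)
    (hnothyp : ¬ IsHyperplane 𝓛 W) :
    (∀ a : S, ¬ IsDeepPoint 𝓛 W a) ∧
    (∀ a ∈ W, ∃ K : Set S, IsAffineLine 𝓛 W K ∧ AtInfinity 𝓛 W K a) ∧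
    (∀ a ∈ W, ∃ b : S, b ∉ W ∧ Collin 𝓛 a b) := by
  -- Since W is not a hyperplane, some line misses W.
  obtain ⟨l, hl, hlW⟩ : ∃ l ∈ 𝓛, l ∩ W = ∅ := by
    by_contra h
    push_neg at h
    exact hnothyp ⟨hsub, hproper, fun l hl => h l hl⟩
  -- Every point of W lies on an affine line's closure.
  have key : ∀ a ∈ W, ∃ K : Set S, IsAffineLine 𝓛 W K ∧ AtInfinity 𝓛 W K a := by
    intro a ha
    have hal : a ∉ l := fun h => Set.eq_empty_iff_forall_notMem.mp hlW a ⟨h, ha⟩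
    have : ∃ b ∈ l, Collin 𝓛 a b := by
      rcases hpolar.2 l hl a hal with ⟨b, ⟨hbl, hbc⟩, _⟩ | hall
      · exact ⟨b, hbl, hbc⟩
      · obtain ⟨x, y, hxy, hx, _⟩ := hpolar.1.1 l hl
        exact ⟨x, hx, hall x hx⟩
    obtain ⟨b, hbl, hbc⟩ := this
    have hbW : b ∉ W := fun h => Set.eq_empty_iff_forall_notMem.mp hlW b ⟨hbl, h⟩
    rcases hbc with rfl | ⟨k, hk, hak, hbk⟩
    · exact absurd ha hbW
    have hkW : ¬ k ⊆ W := fun h => hbW (h hbk)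
    exact ⟨k \ W, ⟨k, hk, hkW, rfl, ⟨a, hak, ha⟩⟩, ⟨k, hk, hkW, rfl, hak, ha⟩⟩
  refine ⟨?_, key, ?_⟩
  · rintro a ⟨haW, hdeep⟩
    obtain ⟨K, _, hinf⟩ := key a haW
    exact hdeep K hinf
  · intro a ha
    obtain ⟨K, ⟨k, hk, hkW, rfl, _⟩, ⟨k', hk', _, hkk', hak', _⟩⟩ := key a ha
    obtain ⟨b, hbk, hbW⟩ := Set.not_subset.mp hkW
    have hk'k : k' = k := by
      by_contra hne
      -- k \ W = k' \ W, both lines; b ∈ k \ W so b ∈ k', and another point too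
      obtain ⟨x, y, hxy, hx, hy⟩ := hpolar.1.1 l hl
      -- simpler: b ∈ k' \ W; need another common point. Use that k \ W has ≥ 2 points.
      obtain ⟨u, v, w, huv, huw, hvw, hu, hv, hw⟩ := hthick k hk
      -- at most one of u,v,w is in W? no, need lines: k ⊄ W gives one point outside;
      -- use subspace: if two of u,v,w in W then k ⊆ W.
      have h2 : ∀ p q : S, p ∈ k → q ∈ k → p ≠ q → p ∈ W → q ∈ W → False := by
        intro p q hp hq hpq hpW hqW
        exact hkW (hsub k hk ⟨p, ⟨hp, hpW⟩, q, ⟨hq, hqW⟩, hpq⟩)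
      have hout : ∃ p q : S, p ≠ q ∧ p ∈ k \ W ∧ q ∈ k \ W := by
        by_cases huW : u ∈ W
        · refine ⟨v, w, hvw, ⟨hv, ?_⟩, ⟨hw, ?_⟩⟩
          · exact fun h => h2 u v hu hv huv huW h
          · exact fun h => h2 u w hu hw huw huW h
        · by_cases hvW : v ∈ W
          · exact ⟨u, w, huw, ⟨hu, huW⟩, ⟨hw, fun h => h2 v w hv hw hvw hvW h⟩⟩
          · exact ⟨u, v, huv, ⟨hu, huW⟩, ⟨hv, hvW⟩⟩
      obtain ⟨p, q, hpq, hp, hq⟩ := hout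
      have hp' : p ∈ k' := by have := hkk' ▸ hp; exact this.1
      have hq' : q ∈ k' := by have := hkk' ▸ hq; exact this.1
      exact hpq (hpolar.1.2 k hk k' hk' (fun h => hne (h ▸ rfl)) p q
        ⟨hp.1, hp'⟩ ⟨hq.1, hq'⟩)
    obtain ⟨c, hck, hcW⟩ := Set.not_subset.mp hkW
    refine ⟨c, hcW, Or.inr ⟨k, hk, hk'k ▸ hak', hck⟩⟩

end PolarComp
end
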